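/- If r'(x) is invertible and r(x) ≠ 0, then the AA(1) coefficient function β is not continuous at the point (x, x): there exists a unit vector e such that |β(x, x + εe)| → ∞ as ε → 0⁺. -/

import Mathlib

open scoped RealInnerProductSpace Topology
open Filter

noncomputable section

abbrev E (n : ℕ) := EuclideanSpace ℝ (Fin n)

/-- The residual `r(x) = x - q(x)`. -/
def rr {n : ℕ} (q : E n → E n) (x : E n) : E n := x - q x

open Classical in
/-- The AA(1) coefficient `β(x,y)`. -/
def beta {n : ℕ} (q : E n → E n) (p : E n × E n) : ℝ :=
  if rr q p.1 = rr q p.2 then 0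
  else -⟪rr q p.1, rr q p.1 - rr q p.2⟫ / ‖rr q p.1 - rr q p.2‖ ^ 2

/-- The AA(1) fixed-point iteration map `Ψ(x,y) = (q(x) + β(x,y)(q(x)-q(y)), x)`. -/
def Psi {n : ℕ} (q : E n → E n) (p : E n × E n) : E n × E n :=
  (q p.1 + beta q p • (q p.1 - q p.2), p.1)

/-- Euclidean norm on the product `ℝⁿ × ℝⁿ ≅ ℝ²ⁿ`. -/
def pnorm {n : ℕ} (p : E n × E n) : ℝ := Real.sqrt (‖p.1‖ ^ 2 + ‖p.2‖ ^ 2)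


/-- if `r'(x)` is invertible and `r(x) ≠ 0`, then `β` is not continuous at
`(x,x)`: there is a unit direction `e` along which `|β(x, x+εe)| → ∞` as `ε → 0`. -/
theorem stmt1 {n : ℕ} (q : E n → E n) (hq : ContDiff ℝ 1 q) (x : E n)
    (hinv : Function.Bijective (fderiv ℝ (rr q) x)) (hrx : rr q x ≠ 0) :
    ∃ e : E n, ‖e‖ = 1 ∧
      Tendsto (fun ε : ℝ => |beta q (x, x + ε • e)|) (𝓝[≠] 0) atTop := by
  classical
  set A := fderiv ℝ (rr q) x with hA
  obtain ⟨v, hv⟩ := hinv.2 (rr q x)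
  have hv0 : v ≠ 0 := by
    rintro rfl
    simp only [map_zero] at hv
    exact hrx hv.symm
  have hnv : (0:ℝ) < ‖v‖ := norm_pos_iff.mpr hv0
  refine ⟨‖v‖⁻¹ • v, ?_, ?_⟩
  · rw [norm_smul, norm_inv, norm_norm, inv_mul_cancel₀ hnv.ne']
  set e : E n := ‖v‖⁻¹ • v with he
  have hAe : A e = ‖v‖⁻¹ • rr q x := by rw [he, map_smul, hv]
  have hAe0 : A e ≠ 0 := by
    rw [hAe]
    exact smul_ne_zero (inv_ne_zero hnv.ne') hrx
  have hdiff : DifferentiableAt ℝ (rr q) x := by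
    have : Differentiable ℝ (rr q) := by
      have hqd := hq.differentiable one_ne_zero
      intro y
      exact (differentiableAt_id.sub (hqd y))
    exact this x
  have hF : HasFDerivAt (rr q) A x := hdiff.hasFDerivAt
  have hline : HasDerivAt (fun ε : ℝ => x + ε • e) e 0 := by
    simpa using ((hasDerivAt_id (0:ℝ)).smul_const e).const_add x
  have hcomp : HasDerivAt (fun ε : ℝ => rr q (x + ε • e)) (A e) 0 := by
    have h0 : HasFDerivAt (rr q) A ((fun ε : ℝ => x + ε • e) 0) := by simpa using hF
    exact h0.comp_hasDerivAt 0 hline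
  set s : ℝ → E n := fun ε => ε⁻¹ • (rr q (x + ε • e) - rr q x) with hsdef
  have hs : Tendsto s (𝓝[≠] (0:ℝ)) (𝓝 (A e)) := by
    have := hasDerivAt_iff_tendsto_slope.mp hcomp
    refine this.congr fun ε => ?_
    simp [hsdef, slope_fun_def, vsub_eq_sub]
  have hsne : ∀ᶠ ε in 𝓝[≠] (0:ℝ), s ε ≠ 0 := hs.eventually_ne hAe0
  -- limit of the bounded factor
  have hCpos : (0:ℝ) < |⟪rr q x, A e⟫| / ‖A e‖ ^ 2 := by
    apply div_pos
    · rw [abs_pos, hAe, real_inner_smul_right, real_inner_self_eq_norm_sq]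
      exact mul_ne_zero (inv_ne_zero hnv.ne')
        (pow_ne_zero 2 (norm_ne_zero_iff.mpr hrx))
    · exact pow_pos (norm_pos_iff.mpr hAe0) 2
  have h2 : Tendsto (fun ε => |⟪rr q x, s ε⟫| / ‖s ε‖ ^ 2) (𝓝[≠] (0:ℝ))
      (𝓝 (|⟪rr q x, A e⟫| / ‖A e‖ ^ 2)) := by
    have hin : Tendsto (fun ε => ⟪rr q x, s ε⟫) (𝓝[≠] (0:ℝ)) (𝓝 ⟪rr q x, A e⟫) :=
      tendsto_const_nhds.inner hs
    exact hin.abs.div ((hs.norm).pow 2) (pow_ne_zero 2 (norm_ne_zero_iff.mpr hAe0))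
  have h1 : Tendsto (fun ε : ℝ => |ε|⁻¹) (𝓝[≠] (0:ℝ)) atTop :=
    tendsto_inv_nhdsGT_zero.comp tendsto_abs_nhdsNE_zero
  have hT : Tendsto (fun ε : ℝ => |ε|⁻¹ * (|⟪rr q x, s ε⟫| / ‖s ε‖ ^ 2)) (𝓝[≠] (0:ℝ)) atTop :=
    h1.atTop_mul_pos hCpos h2
  refine hT.congr' ?_
  filter_upwards [hsne, self_mem_nhdsWithin] with ε hsε hε
  have hε0 : ε ≠ 0 := hε
  have hd : rr q (x + ε • e) - rr q x = ε • s ε := by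
    rw [hsdef]
    simp [smul_smul, mul_inv_cancel₀ hε0]
  have hne' : ¬ (rr q x = rr q (x + ε • e)) := by
    intro h
    apply hsε
    rw [hsdef]
    simp [← h]
  simp only [beta]
  rw [if_neg hne']
  set w := s ε with hwdef
  have hd' : rr q x - rr q (x + ε • e) = -(ε • w) := by rw [← hd, neg_sub]
  rw [hd']
  have h1' : (-⟪rr q x, -(ε • w)⟫) = ε * ⟪rr q x, w⟫ := by
    rw [inner_neg_right, real_inner_smul_right, neg_neg]
  have h2' : ‖-(ε • w)‖ ^ 2 = |ε| ^ 2 * ‖w‖ ^ 2 := by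
    rw [norm_neg, norm_smul, mul_pow, Real.norm_eq_abs]
  rw [h1', h2', abs_div, abs_mul]
  rw [abs_of_nonneg (by positivity : (0:ℝ) ≤ |ε| ^ 2 * ‖w‖ ^ 2)]
  have hwn : ‖w‖ ≠ 0 := norm_ne_zero_iff.mpr hsε
  have hae : |ε| ≠ 0 := abs_ne_zero.mpr hε0
  field_simp
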